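/- Under the hypotheses of the key inequality — V concave and V(Δ₂) - V(Δ₁) ≥ (L/(ε p))·(Δ₂ - Δ₁) for Δ₁ ≤ Δ₂, and Q(Δ, a) = Δ + (L-1)/2 + (ε/L)·p·V(r) + (ε/L)·(1-p)·V(Δ+L) + (1-ε/L)·V(Δ) — if additionally V(Δ₁) = Q(Δ₁, a) and V(Δ₂) ≤ Q(Δ₂, a) for some Δ₁ ≤ Δ₂, then V(Δ₂) = Q(Δ₂, a). -/

import Mathlib

lemma inc_anti (V : ℕ → ℝ) (hconc : ∀ x : ℕ, V (x + 2) - V (x + 1) ≤ V (x + 1) - V x) :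
    ∀ x y : ℕ, x ≤ y → V (y + 1) - V y ≤ V (x + 1) - V x := by
  intro x y hxy
  induction y with
  | zero => simp_all
  | succ n ih =>
    rcases Nat.lt_or_ge x (n+1) with h | h
    · exact le_trans (hconc n) (ih (Nat.lt_succ_iff.mp h))
    · have : x = n + 1 := le_antisymm hxy h
      simp [this]

lemma shift_le (V : ℕ → ℝ) (hconc : ∀ x : ℕ, V (x + 2) - V (x + 1) ≤ V (x + 1) - V x)
    (a k : ℕ) : ∀ d : ℕ, V (a + d + k) - V (a + k) ≤ V (a + d) - V a := by
  intro d
  induction d with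
  | zero => simp
  | succ n ih =>
    have h1 := inc_anti V hconc (a + n) (a + n + k) (Nat.le_add_right _ _)
    have e1 : a + (n + 1) + k = a + n + k + 1 := by ring
    have e2 : a + (n + 1) = a + n + 1 := by ring
    rw [e1, e2]
    linarith

/-- Threshold structure: if action `a` is optimal at `Δ₁` (i.e. `V Δ₁ = Q Δ₁`) and
`V ≤ Q` at `Δ₂ ≥ Δ₁`, then `a` remains optimal at `Δ₂`. -/
theorem threshold_structure (V : ℕ → ℝ) (L : ℕ) (hL : 0 < L)
    (p ε : ℝ) (hp0 : 0 < p) (hp1 : p ≤ 1) (hε0 : 0 < ε) (hεL : ε ≤ (L : ℝ)) (r : ℕ)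
    (Q : ℕ → ℝ)
    (hQ : ∀ Δ : ℕ, Q Δ = (Δ : ℝ) + ((L : ℝ) - 1) / 2 + (ε / L) * p * V r
          + (ε / L) * (1 - p) * V (Δ + L) + (1 - ε / L) * V Δ)
    (hconc : ∀ x : ℕ, V (x + 2) - V (x + 1) ≤ V (x + 1) - V x)
    (hslope : ∀ Δ₁ Δ₂ : ℕ, Δ₁ ≤ Δ₂ →
      V Δ₂ - V Δ₁ ≥ ((L : ℝ) / (ε * p)) * ((Δ₂ : ℝ) - (Δ₁ : ℝ)))
    (Δ₁ Δ₂ : ℕ) (h12 : Δ₁ ≤ Δ₂)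
    (hopt1 : V Δ₁ = Q Δ₁) (hle2 : V Δ₂ ≤ Q Δ₂) :
    V Δ₂ = Q Δ₂ := by
  have hLpos : (0:ℝ) < (L:ℝ) := by exact_mod_cast hL
  have hεLpos : 0 < ε / L := div_pos hε0 hLpos
  have hεL1 : ε / L ≤ 1 := (div_le_one hLpos).mpr hεL
  -- slope inequality
  have hs := hslope Δ₁ Δ₂ h12
  have hcast : (Δ₁:ℝ) ≤ (Δ₂:ℝ) := by exact_mod_cast h12
  have hkey : (ε / L) * p * (V Δ₂ - V Δ₁) ≥ (Δ₂:ℝ) - (Δ₁:ℝ) := by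
    have hεp : 0 < ε * p := mul_pos hε0 hp0
    have h1 : (ε / L) * p * (V Δ₂ - V Δ₁) ≥ (ε / L) * p * (((L:ℝ) / (ε * p)) * ((Δ₂:ℝ) - (Δ₁:ℝ))) := by
      apply mul_le_mul_of_nonneg_left hs (le_of_lt (mul_pos hεLpos hp0))
    have h2 : (ε / L) * p * (((L:ℝ) / (ε * p)) * ((Δ₂:ℝ) - (Δ₁:ℝ))) = (Δ₂:ℝ) - (Δ₁:ℝ) := by
      field_simp
    linarith [h1, h2 ▸ h1]
  -- shift inequality
  have hshift : V (Δ₂ + L) - V (Δ₁ + L) ≤ V Δ₂ - V Δ₁ := by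
    obtain ⟨d, rfl⟩ := Nat.exists_eq_add_of_le h12
    exact shift_le V hconc Δ₁ L d
  have hV12 : V Δ₂ - V Δ₁ ≥ 0 := by
    have := mul_nonneg (mul_nonneg hεLpos.le hp0.le) (sub_nonneg.mpr hcast)
    nlinarith [mul_pos hεLpos hp0]
  have hge : Q Δ₂ ≤ V Δ₂ := by
    have e1 := hQ Δ₁
    have e2 := hQ Δ₂
    have h1p : (0:ℝ) ≤ 1 - p := by linarith
    have hmul : (ε / L) * (1 - p) * (V (Δ₂ + L) - V (Δ₁ + L)) ≤ (ε / L) * (1 - p) * (V Δ₂ - V Δ₁) :=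
      mul_le_mul_of_nonneg_left hshift (mul_nonneg hεLpos.le h1p)
    nlinarith
  linarith
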